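/- Let n be even, ξ the indicator that letters {1,…,n/2} occupy vertices {1,…,n/2}, and E the L-reversal Dirichlet form. Then E(√ξ, √ξ) = E(ξ, ξ) ≤ (C L / n) ν[ξ] for a universal constant C; consequently the log-Sobolev constant s(n,L) satisfies s(n,L) ≥ n^2/(C' L). -/

import Mathlib

def segRev {n : ℕ} {α : Type*} (x h : ℕ) (η : Fin n → α) : Fin n → α := fun y =>
  if (y.val + n - x % n) % n ≤ h then
    η ⟨(x + h - (y.val + n - x % n) % n) % n, Nat.mod_lt _ y.pos⟩
  else η y

/-- The event that letters `{0,…,n/2−1}` occupy exactly the vertices `{0,…,n/2−1}`. -/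
def halfEvent (n : ℕ) (η : Fin n → Fin n) : Prop :=
  ∀ x : Fin n, x.val < n / 2 ↔ (η x).val < n / 2

instance {n : ℕ} : DecidablePred (halfEvent n) := fun η => by
  unfold halfEvent; infer_instance

/-- The indicator `ξ` of the half-occupation event. -/
def xiInd (n : ℕ) (η : Fin n → Fin n) : ℝ := if halfEvent n η then 1 else 0

/-- Expectation under the uniform measure on permutations of `n` letters. -/
noncomputable def pexp (n : ℕ) (f : Equiv.Perm (Fin n) → ℝ) : ℝ :=
  (∑ η : Equiv.Perm (Fin n), f η) / (Nat.factorial n : ℝ)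

/-- The `L`-reversal Dirichlet form `E(f,f) = (1/(2nL)) Σ_x Σ_{ℓ≤L} ν[(R_{x,ℓ} f)²]`. -/
noncomputable def dirL (n L : ℕ) (f : (Fin n → Fin n) → ℝ) : ℝ :=
  (1 / (2 * (n : ℝ) * (L : ℝ))) * ∑ x ∈ Finset.range n, ∑ ℓ ∈ Finset.Icc 1 L,
    (∑ η : Equiv.Perm (Fin n), (f (segRev x ℓ ⇑η) - f ⇑η) ^ 2) / (Nat.factorial n : ℝ)

/-- The entropy `Ent(f) = ν[f log f] − ν[f] log ν[f]` of a function of configurations. -/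
noncomputable def entF (n : ℕ) (f : (Fin n → Fin n) → ℝ) : ℝ :=
  pexp n (fun η => f ⇑η * Real.log (f ⇑η)) -
    pexp n (fun η => f ⇑η) * Real.log (pexp n (fun η => f ⇑η))

lemma modcalc1 {n m t : ℕ} (hm : m < n) : ((m + t) % n + n - m) % n = t % n := by
  have hn : 0 < n := by omega
  have h1 : (m + t) % n + n - m + m = (m + t) % n + n := by omega
  have h2 : ((m + t) % n + n - m + m) % n = (t + m) % n := by
    rw [h1, Nat.add_mod_right, Nat.mod_eq_of_lt (Nat.mod_lt _ hn), Nat.add_comm t m]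
  exact Nat.ModEq.add_right_cancel' m h2

lemma modcalc2 {n x d y : ℕ} (hy : y < n) (hd : d = (y + n - x % n) % n) : (x + d) % n = y := by
  have hn : 0 < n := by omega
  have hm : x % n < n := Nat.mod_lt _ hn
  have h3 : x % n + (y + n - x % n) = y + n := by omega
  rw [← Nat.mod_add_mod, hd, Nat.add_mod_mod, h3, Nat.add_mod_right, Nat.mod_eq_of_lt hy]

lemma segRev_apply {n : ℕ} {α : Type*} (x h : ℕ) (η : Fin n → α) (y : Fin n) :
    segRev x h η y = η (segRev x h (id : Fin n → Fin n) y) := by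
  unfold segRev
  by_cases hc : (y.val + n - x % n) % n ≤ h <;> simp [hc]

lemma segRev_id_invol {n : ℕ} (x h : ℕ) (hh : h ≤ n) (y : Fin n) :
    segRev x h (id : Fin n → Fin n) (segRev x h (id : Fin n → Fin n) y) = y := by
  have hn : 0 < n := y.pos
  have hm : x % n < n := Nat.mod_lt _ hn
  by_cases hc : (y.val + n - x % n) % n ≤ h
  · set d := (y.val + n - x % n) % n with hd
    have hdn : d < n := Nat.mod_lt _ hn
    have hy1 : segRev x h (id : Fin n → Fin n) y = ⟨(x + h - d) % n, Nat.mod_lt _ hn⟩ := by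
      unfold segRev; rw [if_pos hc]; rfl
    rw [hy1]
    have hz : (x + h - d) % n = (x % n + (h - d)) % n := by
      rw [Nat.mod_add_mod]; congr 1; omega
    have hd' : ((x + h - d) % n + n - x % n) % n = (h - d) % n := by
      rw [hz]; exact modcalc1 hm
    by_cases hsp : h = n ∧ d = 0
    · obtain ⟨hh1, hd0⟩ := hsp
      have hyx : y.val = x % n := by
        have h0 : (y.val + n - x % n) % n = 0 := by rw [← hd, hd0]
        obtain ⟨c, hc2⟩ := Nat.dvd_of_mod_eq_zero h0
        have hy2 : y.val < n := y.isLt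
        have hlt : n * c < 2 * n := by omega
        have hgt : 0 < n * c := by omega
        have h2c : 2 ≤ c ∨ c = 0 ∨ c = 1 := by omega
        rcases h2c with h2c | h2c | h2c
        · have h5 : n * 2 ≤ n * c := Nat.mul_le_mul_left _ h2c
          omega
        · subst h2c; simp at hgt
        · subst h2c; rw [Nat.mul_one] at hc2; omega
      have hdd : (h - d) % n = 0 := by rw [hd0, hh1]; simp
      unfold segRev
      split
      · apply Fin.ext
        simp only [id_eq, Fin.val_mk, hd', hdd]
        have h6 : x + h - 0 = x + n := by omega
        rw [h6, Nat.add_mod_right]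
        omega
      · rename_i hsplit
        rw [Fin.val_mk, hd', hdd] at hsplit
        exact absurd (Nat.zero_le h) hsplit
    · have ht : h - d < n := by omega
      have hd'' : ((x + h - d) % n + n - x % n) % n = h - d := by
        rw [hd', Nat.mod_eq_of_lt ht]
      unfold segRev
      split
      · apply Fin.ext
        simp only [id_eq, Fin.val_mk, hd'']
        have h4 : x + h - (h - d) = x + d := by omega
        rw [h4]
        exact modcalc2 y.isLt hd
      · rename_i hsplit
        rw [Fin.val_mk, hd''] at hsplit
        exact absurd (by omega : h - d ≤ h) hsplit
  · simp [segRev, hc]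

lemma segRev_eq_comp {n : ℕ} {α : Type*} (x h : ℕ) (η : Fin n → α) :
    segRev x h η = η ∘ segRev x h (id : Fin n → Fin n) := funext (segRev_apply x h η)

lemma good_x {n x ℓ : ℕ} (hx : x < n)
    (hgood : x + ℓ < n / 2 ∨ (n / 2 ≤ x ∧ x + ℓ < n)) (y : Fin n) :
    y.val < n / 2 ↔ ((segRev x ℓ (id : Fin n → Fin n)) y).val < n / 2 := by
  have hn : 0 < n := by omega
  have hxm : x % n = x := Nat.mod_eq_of_lt hx
  by_cases hc : (y.val + n - x % n) % n ≤ ℓ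
  · set d := (y.val + n - x % n) % n with hd
    have h1 : (x + d) % n = y.val := modcalc2 y.isLt hd
    have h2 : x + d < n := by rcases hgood with h | h <;> omega
    rw [Nat.mod_eq_of_lt h2] at h1
    have hr : segRev x ℓ (id : Fin n → Fin n) y
        = ⟨(x + ℓ - d) % n, Nat.mod_lt _ hn⟩ := by
      unfold segRev; rw [if_pos hc]; rfl
    rw [hr]
    have h3 : x + ℓ - d = x + (ℓ - d) := by omega
    have h4 : (x + ℓ - d) % n = x + (ℓ - d) := by
      rw [h3, Nat.mod_eq_of_lt (by rcases hgood with h | h <;> omega)]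
    simp only [Fin.val_mk, h4]
    rcases hgood with h | h <;> omega
  · have hr : segRev x ℓ (id : Fin n → Fin n) y = y := by
      unfold segRev; rw [if_neg hc]; rfl
    rw [hr]

lemma halfEvent_segRev_iff {n x ℓ : ℕ} (hx : x < n) (hℓ : ℓ ≤ n)
    (hgood : x + ℓ < n / 2 ∨ (n / 2 ≤ x ∧ x + ℓ < n)) (η : Fin n → Fin n) :
    halfEvent n (segRev x ℓ η) ↔ halfEvent n η := by
  rw [segRev_eq_comp]
  constructor <;> intro H z
  · have h1 := H (segRev x ℓ (id : Fin n → Fin n) z)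
    rw [Function.comp_apply, segRev_id_invol x ℓ hℓ z] at h1
    exact (good_x hx hgood z).trans h1
  · exact (good_x hx hgood z).trans (H _)


noncomputable def rPerm (n x h : ℕ) (hh : h ≤ n) : Equiv.Perm (Fin n) :=
  Function.Involutive.toPerm (segRev x h (id : Fin n → Fin n))
    (fun y => segRev_id_invol x h hh y)

lemma segRev_perm {n : ℕ} (x h : ℕ) (hh : h ≤ n) (σ : Equiv.Perm (Fin n)) :
    segRev x h ⇑σ = ⇑(σ * rPerm n x h hh) := by
  rw [segRev_eq_comp]; rfl

lemma sum_mul_right {n : ℕ} (e : Equiv.Perm (Fin n)) (F : Equiv.Perm (Fin n) → ℝ) :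
    ∑ σ : Equiv.Perm (Fin n), F (σ * e) = ∑ σ : Equiv.Perm (Fin n), F σ :=
  Equiv.sum_comp (Equiv.mulRight e) F

lemma xi_sq_le {n : ℕ} (c0 c1 : ℝ) (hc : (c1 - c0) ^ 2 ≤ 1) (a b : Fin n → Fin n) :
    ((if halfEvent n a then c1 else c0) - (if halfEvent n b then c1 else c0)) ^ 2 ≤
      xiInd n a + xiInd n b := by
  unfold xiInd
  split_ifs with h1 h2 h2
  · simp
  · have h3 : (0:ℝ) ≤ 1 := by norm_num
    linarith
  · have h4 : (c0 - c1) ^ 2 = (c1 - c0) ^ 2 := by ring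
    linarith
  · simp

lemma dirL_indic_bound {n L : ℕ} (hn : 0 < n) (hL1 : 1 ≤ L) (hLn : L ≤ n) (c0 c1 : ℝ)
    (hc : (c1 - c0) ^ 2 ≤ 1) :
    dirL n L (fun a => if halfEvent n a then c1 else c0) ≤
      2 * (L : ℝ) / (n : ℝ) * pexp n (fun η => xiInd n ⇑η) := by
  set u : (Fin n → Fin n) → ℝ := fun a => if halfEvent n a then c1 else c0 with hu
  set p := pexp n (fun η => xiInd n ⇑η) with hp
  have hN : (0 : ℝ) < (Nat.factorial n : ℝ) := by positivity
  have hp0 : 0 ≤ p := by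
    rw [hp, pexp]
    apply div_nonneg _ hN.le
    apply Finset.sum_nonneg
    intro η _
    unfold xiInd; split_ifs <;> norm_num
  -- the inner term for given x ℓ
  have hterm : ∀ x ℓ : ℕ, ℓ ≤ n →
      (∑ η : Equiv.Perm (Fin n), (u (segRev x ℓ ⇑η) - u ⇑η) ^ 2) / (Nat.factorial n : ℝ)
        ≤ 2 * p := by
    intro x ℓ hℓ
    rw [div_le_iff₀ hN]
    have hle : ∀ η : Equiv.Perm (Fin n), (u (segRev x ℓ ⇑η) - u ⇑η) ^ 2 ≤
        xiInd n (segRev x ℓ ⇑η) + xiInd n ⇑η := fun η => xi_sq_le c0 c1 hc _ _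
    calc ∑ η : Equiv.Perm (Fin n), (u (segRev x ℓ ⇑η) - u ⇑η) ^ 2
        ≤ ∑ η : Equiv.Perm (Fin n), (xiInd n (segRev x ℓ ⇑η) + xiInd n ⇑η) :=
          Finset.sum_le_sum (fun η _ => hle η)
      _ = ∑ η : Equiv.Perm (Fin n), xiInd n (segRev x ℓ ⇑η)
            + ∑ η : Equiv.Perm (Fin n), xiInd n ⇑η := Finset.sum_add_distrib
      _ = 2 * (p * (Nat.factorial n : ℝ)) := by
          have h1 : ∑ η : Equiv.Perm (Fin n), xiInd n (segRev x ℓ ⇑η)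
              = ∑ η : Equiv.Perm (Fin n), xiInd n ⇑η := by
            have := sum_mul_right (rPerm n x ℓ hℓ) (fun σ => xiInd n ⇑σ)
            calc ∑ η : Equiv.Perm (Fin n), xiInd n (segRev x ℓ ⇑η)
                = ∑ η : Equiv.Perm (Fin n), xiInd n ⇑(η * rPerm n x ℓ hℓ) := by
                  apply Finset.sum_congr rfl
                  intro η _
                  rw [segRev_perm x ℓ hℓ η]
              _ = ∑ η : Equiv.Perm (Fin n), xiInd n ⇑η := this
          have h2 : ∑ η : Equiv.Perm (Fin n), xiInd n ⇑η = p * (Nat.factorial n : ℝ) := by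
            rw [hp, pexp, div_mul_cancel₀]
            exact hN.ne'
          rw [h1, h2]; ring
      _ = 2 * p * (Nat.factorial n : ℝ) := by ring
  -- zero for good x
  have hzero : ∀ x ℓ : ℕ, x < n → ℓ ≤ n → (x + ℓ < n / 2 ∨ (n / 2 ≤ x ∧ x + ℓ < n)) →
      (∑ η : Equiv.Perm (Fin n), (u (segRev x ℓ ⇑η) - u ⇑η) ^ 2) / (Nat.factorial n : ℝ)
        = 0 := by
    intro x ℓ hx hℓ hgood
    rw [div_eq_zero_iff]
    left
    apply Finset.sum_eq_zero
    intro η _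
    have : u (segRev x ℓ ⇑η) = u ⇑η := by
      rw [hu]
      simp only [halfEvent_segRev_iff hx hℓ hgood]
    rw [this]; ring
  set F : ℕ → ℝ := fun x => ∑ ℓ ∈ Finset.Icc 1 L,
    (∑ η : Equiv.Perm (Fin n), (u (segRev x ℓ ⇑η) - u ⇑η) ^ 2) / (Nat.factorial n : ℝ)
      with hF
  have hF0 : ∀ x : ℕ, 0 ≤ F x := by
    intro x
    apply Finset.sum_nonneg
    intro ℓ _
    positivity
  have hFbound : ∀ x : ℕ, F x ≤ (L : ℝ) * (2 * p) := by
    intro x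
    calc F x ≤ ∑ ℓ ∈ Finset.Icc 1 L, 2 * p := by
          apply Finset.sum_le_sum
          intro ℓ hℓ
          simp only [Finset.mem_Icc] at hℓ
          exact hterm x ℓ (le_trans hℓ.2 hLn)
      _ = (L : ℝ) * (2 * p) := by
          rw [Finset.sum_const, Nat.card_Icc]
          simp
  have hFgood : ∀ x : ℕ, x < n → (x + L < n / 2 ∨ (n / 2 ≤ x ∧ x + L < n)) → F x = 0 := by
    intro x hx hg
    apply Finset.sum_eq_zero
    intro ℓ hℓ
    simp only [Finset.mem_Icc] at hℓ
    exact hzero x ℓ hx (le_trans hℓ.2 hLn) (by rcases hg with h | h <;> [left; right] <;> omega)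
  -- split range n into bad and good
  set bad : Finset ℕ := (Finset.range n).filter
    (fun x => ¬(x + L < n / 2 ∨ (n / 2 ≤ x ∧ x + L < n))) with hbad
  have hsum : ∑ x ∈ Finset.range n, F x = ∑ x ∈ bad, F x := by
    rw [hbad]
    rw [← Finset.sum_filter_add_sum_filter_not (Finset.range n)
      (fun x => ¬(x + L < n / 2 ∨ (n / 2 ≤ x ∧ x + L < n)))]
    have : ∑ x ∈ (Finset.range n).filter
        (fun x => ¬¬(x + L < n / 2 ∨ (n / 2 ≤ x ∧ x + L < n))), F x = 0 := by
      apply Finset.sum_eq_zero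
      intro x hx
      simp only [Finset.mem_filter, Finset.mem_range, not_not] at hx
      exact hFgood x hx.1 hx.2
    rw [this, add_zero]
  have hcard : (bad.card : ℝ) ≤ 2 * L := by
    have hsub : bad ⊆ Finset.Ico (n / 2 - L) (n / 2) ∪ Finset.Ico (n - L) n := by
      intro x hx
      simp only [hbad, Finset.mem_filter, Finset.mem_range, not_or, not_lt, not_and] at hx
      simp only [Finset.mem_union, Finset.mem_Ico]
      omega
    have := Finset.card_le_card hsub
    have h2 := Finset.card_union_le (Finset.Ico (n / 2 - L) (n / 2)) (Finset.Ico (n - L) n)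
    rw [Nat.card_Ico, Nat.card_Ico] at h2
    have : bad.card ≤ 2 * L := by omega
    exact_mod_cast le_trans (Nat.cast_le.mpr this) (le_refl _)
  have htot : ∑ x ∈ Finset.range n, F x ≤ 2 * (L : ℝ) * ((L : ℝ) * (2 * p)) := by
    rw [hsum]
    calc ∑ x ∈ bad, F x ≤ ∑ x ∈ bad, (L : ℝ) * (2 * p) :=
          Finset.sum_le_sum (fun x _ => hFbound x)
      _ = (bad.card : ℝ) * ((L : ℝ) * (2 * p)) := by
          rw [Finset.sum_const]; simp [mul_comm]
      _ ≤ 2 * (L : ℝ) * ((L : ℝ) * (2 * p)) := by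
          apply mul_le_mul_of_nonneg_right hcard
          positivity
  unfold dirL
  have hcoef : (0:ℝ) < 2 * (n : ℝ) * (L : ℝ) := by positivity
  calc (1 / (2 * (n : ℝ) * (L : ℝ))) * ∑ x ∈ Finset.range n, F x
      ≤ (1 / (2 * (n : ℝ) * (L : ℝ))) * (2 * (L : ℝ) * ((L : ℝ) * (2 * p))) := by
        apply mul_le_mul_of_nonneg_left htot
        positivity
    _ = 2 * (L : ℝ) / (n : ℝ) * p := by
        field_simp

lemma two_pow_le_choose : ∀ k : ℕ, 2 ^ k ≤ Nat.choose (2 * k) k := by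
  intro k
  induction k with
  | zero => simp
  | succ k ih =>
    have h1 : Nat.choose (2 * k) k ≤ Nat.choose (2 * k + 1) k := by
      cases k with
      | zero => simp
      | succ j =>
        have hp := Nat.choose_succ_succ (2 * (j + 1)) j
        simp only [Nat.succ_eq_add_one] at hp
        omega
    have h2 : Nat.choose (2 * k + 1 + 1) (k + 1)
        = Nat.choose (2 * k + 1) k + Nat.choose (2 * k + 1) (k + 1) :=
      Nat.choose_succ_succ (2 * k + 1) k
    have h3 : Nat.choose (2 * k + 1) (k + 1)
        = Nat.choose (2 * k) k + Nat.choose (2 * k) (k + 1) :=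
      Nat.choose_succ_succ (2 * k) k
    have h4 : 2 * (k + 1) = 2 * k + 1 + 1 := by ring
    have h5 : (2 : ℕ) ^ (k + 1) = 2 * 2 ^ k := by rw [pow_succ]; ring
    rw [h4, h5]
    omega

/-- number of permutations in the half event -/
def hcard (n : ℕ) : ℕ :=
  (Finset.univ.filter (fun σ : Equiv.Perm (Fin n) => halfEvent n ⇑σ)).card

lemma hcard_pos (n : ℕ) : 0 < hcard n := by
  apply Finset.card_pos.mpr
  exact ⟨1, by rw [Finset.mem_filter]; exact ⟨Finset.mem_univ _, fun _ => Iff.rfl⟩⟩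

lemma hcard_le (n : ℕ) : hcard n ≤ (Nat.factorial n) := by
  calc hcard n ≤ (Finset.univ : Finset (Equiv.Perm (Fin n))).card := Finset.card_filter_le _ _
    _ = Nat.factorial n := by rw [Finset.card_univ, Fintype.card_perm, Fintype.card_fin]

lemma card_subtype_lt_half (n k : ℕ) (hk : k ≤ n) :
    Fintype.card {x : Fin n // x.val < k} = k := by
  have e : {x : Fin n // x.val < k} ≃ Fin k :=
    { toFun := fun x => ⟨x.1.1, x.2⟩
      invFun := fun j => ⟨⟨j.1, lt_of_lt_of_le j.2 hk⟩, j.2⟩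
      left_inv := fun x => rfl
      right_inv := fun j => rfl }
  rw [Fintype.card_congr e, Fintype.card_fin]

lemma card_subtype_ge_half (n k : ℕ) (hk : k ≤ n) :
    Fintype.card {x : Fin n // ¬ x.val < k} = n - k := by
  have e : {x : Fin n // ¬ x.val < k} ≃ Fin (n - k) :=
    { toFun := fun x => ⟨x.1.1 - k, by have := x.1.2; have := x.2; omega⟩
      invFun := fun j => ⟨⟨j.1 + k, by have := j.2; omega⟩, by simp only [Fin.val_mk]; omega⟩
      left_inv := fun x => by
        apply Subtype.ext; apply Fin.ext
        have := x.2; simp; omega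
      right_inv := fun j => by
        apply Fin.ext; simp }
  rw [Fintype.card_congr e, Fintype.card_fin]

lemma hcard_le_factorials (n : ℕ) :
    hcard n ≤ Nat.factorial (n / 2) * Nat.factorial (n - n / 2) := by
  set k := n / 2 with hk
  have hkn : k ≤ n := Nat.div_le_self _ _
  have hinj : Function.Injective
      (fun σ : {σ : Equiv.Perm (Fin n) // halfEvent n ⇑σ} =>
        ((σ.1.subtypePerm (fun x => (σ.2 x).symm) : Equiv.Perm {x : Fin n // x.val < k}),
         (σ.1.subtypePerm (fun x => not_congr (σ.2 x).symm) :
            Equiv.Perm {x : Fin n // ¬ x.val < k}))) := by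
    intro a b hab
    simp only [Prod.mk.injEq] at hab
    apply Subtype.ext
    apply Equiv.ext
    intro x
    by_cases hx : x.val < k
    · have := congrFun (congrArg (fun (e : Equiv.Perm {x : Fin n // x.val < k}) =>
        (e : {x : Fin n // x.val < k} → {x : Fin n // x.val < k})) hab.1) ⟨x, hx⟩
      simpa [Equiv.Perm.subtypePerm, Subtype.ext_iff] using this
    · have := congrFun (congrArg (fun (e : Equiv.Perm {x : Fin n // ¬ x.val < k}) =>
        (e : {x : Fin n // ¬ x.val < k} → {x : Fin n // ¬ x.val < k})) hab.2) ⟨x, hx⟩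
      simpa [Equiv.Perm.subtypePerm, Subtype.ext_iff] using this
  have hcardeq : hcard n = Fintype.card {σ : Equiv.Perm (Fin n) // halfEvent n ⇑σ} := by
    unfold hcard; rw [Fintype.card_subtype]
  have := Fintype.card_le_of_injective _ hinj
  rw [hcardeq]
  calc Fintype.card {σ : Equiv.Perm (Fin n) // halfEvent n ⇑σ}
      ≤ Fintype.card (Equiv.Perm {x : Fin n // x.val < k} ×
          Equiv.Perm {x : Fin n // ¬ x.val < k}) := this
    _ = Nat.factorial k * Nat.factorial (n - k) := by
        rw [Fintype.card_prod, Fintype.card_perm, Fintype.card_perm,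
          card_subtype_lt_half n k hkn, card_subtype_ge_half n k hkn]

lemma hcard_mul_pow_le (n : ℕ) (hn : Even n) :
    hcard n * 2 ^ (n / 2) ≤ Nat.factorial n := by
  obtain ⟨k, hk⟩ := hn
  have hk2 : n = 2 * k := by omega
  have hhalf : n / 2 = k := by omega
  have h1 : hcard n ≤ Nat.factorial k * Nat.factorial k := by
    have h := hcard_le_factorials n
    rw [hhalf] at h
    calc hcard n ≤ Nat.factorial k * Nat.factorial (n - k) := h
      _ = Nat.factorial k * Nat.factorial k := by congr 2; omega
  calc hcard n * 2 ^ (n / 2) ≤ (Nat.factorial k * Nat.factorial k) * 2 ^ k := by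
        rw [hhalf]; exact Nat.mul_le_mul_right _ h1
    _ ≤ Nat.choose (2 * k) k * Nat.factorial k * Nat.factorial k := by
        have := two_pow_le_choose k
        calc Nat.factorial k * Nat.factorial k * 2 ^ k
            ≤ Nat.factorial k * Nat.factorial k * Nat.choose (2 * k) k :=
              Nat.mul_le_mul_left _ this
          _ = Nat.choose (2 * k) k * Nat.factorial k * Nat.factorial k := by ring
    _ = Nat.factorial (2 * k) := by
        have := Nat.choose_mul_factorial_mul_factorial (by omega : k ≤ 2 * k)
        have h2 : 2 * k - k = k := by omega
        rw [h2] at this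
        exact this
    _ = Nat.factorial n := by rw [hk2]

lemma card_univ_perm (n : ℕ) :
    (Finset.univ : Finset (Equiv.Perm (Fin n))).card = Nat.factorial n := by
  rw [Finset.card_univ, Fintype.card_perm, Fintype.card_fin]

lemma sum_indic (n : ℕ) (a b : ℝ) :
    ∑ η : Equiv.Perm (Fin n), (if halfEvent n ⇑η then a else b)
      = (hcard n : ℝ) * a + ((Nat.factorial n : ℝ) - (hcard n : ℝ)) * b := by
  rw [Finset.sum_ite]
  rw [Finset.sum_const, Finset.sum_const]
  have h1 : (Finset.filter (fun η : Equiv.Perm (Fin n) => ¬ halfEvent n ⇑η)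
      Finset.univ).card = Nat.factorial n - hcard n := by
    have := Finset.card_filter_add_card_filter_not
      (s := (Finset.univ : Finset (Equiv.Perm (Fin n))))
      (p := fun η => halfEvent n ⇑η)
    rw [card_univ_perm] at this
    unfold hcard
    omega
  have h2 : hcard n ≤ Nat.factorial n := by
    calc hcard n ≤ (Finset.univ : Finset (Equiv.Perm (Fin n))).card :=
          Finset.card_filter_le _ _
      _ = Nat.factorial n := card_univ_perm n
  rw [h1]
  simp only [nsmul_eq_mul]
  rw [Nat.cast_sub h2]
  unfold hcard
  ring

lemma xi_add_eq (n : ℕ) (δ : ℝ) (c : Fin n → Fin n) :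
    xiInd n c + δ = if halfEvent n c then 1 + δ else δ := by
  unfold xiInd; split_ifs <;> ring

lemma pexp_xi (n : ℕ) :
    pexp n (fun η => xiInd n ⇑η) = (hcard n : ℝ) / (Nat.factorial n : ℝ) := by
  unfold pexp
  congr 1
  have : ∀ η : Equiv.Perm (Fin n), xiInd n ⇑η = if halfEvent n ⇑η then (1:ℝ) else 0 := by
    intro η; rfl
  rw [Finset.sum_congr rfl (fun η _ => this η), sum_indic]
  ring

lemma pexp_f0 (n : ℕ) (δ : ℝ) :
    pexp n (fun η => xiInd n ⇑η + δ)
      = (hcard n : ℝ) / (Nat.factorial n : ℝ) + δ := by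
  have hN : (0:ℝ) < (Nat.factorial n : ℝ) := by positivity
  unfold pexp
  rw [Finset.sum_congr rfl (fun (η : Equiv.Perm (Fin n)) _ => xi_add_eq n δ ⇑η), sum_indic]
  field_simp
  ring

lemma entF_f0 (n : ℕ) (δ : ℝ) :
    entF n (fun c => xiInd n c + δ)
      = (hcard n : ℝ) / (Nat.factorial n : ℝ) * ((1 + δ) * Real.log (1 + δ))
        + (1 - (hcard n : ℝ) / (Nat.factorial n : ℝ)) * (δ * Real.log δ)
        - ((hcard n : ℝ) / (Nat.factorial n : ℝ) + δ)
            * Real.log ((hcard n : ℝ) / (Nat.factorial n : ℝ) + δ) := by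
  have hN : (0:ℝ) < (Nat.factorial n : ℝ) := by positivity
  unfold entF
  rw [pexp_f0]
  congr 1
  unfold pexp
  have h1 : ∀ η : Equiv.Perm (Fin n),
      (xiInd n ⇑η + δ) * Real.log (xiInd n ⇑η + δ)
        = if halfEvent n ⇑η then (1 + δ) * Real.log (1 + δ) else δ * Real.log δ := by
    intro η
    rw [xi_add_eq]
    split_ifs <;> rfl
  rw [Finset.sum_congr rfl (fun η _ => h1 η), sum_indic]
  field_simp

lemma ent_lower (p : ℝ) (hp : 0 < p) (hp2 : p ≤ 1/2) :
    -(1/2) * p * Real.log p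
      ≤ p * ((1 + p^6) * Real.log (1 + p^6)) + (1 - p) * (p^6 * Real.log (p^6))
        - (p + p^6) * Real.log (p + p^6) := by
  have hδ0 : (0:ℝ) < p^6 := by positivity
  have hδ1 : p^6 ≤ 1/64 := by
    have := pow_le_pow_left₀ hp.le hp2 6
    norm_num at this
    linarith
  have h1 : 0 ≤ p * ((1 + p^6) * Real.log (1 + p^6)) := by
    have := Real.log_nonneg (by linarith : (1:ℝ) ≤ 1 + p^6)
    positivity
  have hlogδ : Real.log (p^6) ≤ 0 := Real.log_nonpos hδ0.le (by linarith)
  have h2 : p^6 * Real.log (p^6) ≤ (1 - p) * (p^6 * Real.log (p^6)) := by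
    have hz : p^6 * Real.log (p^6) ≤ 0 := mul_nonpos_of_nonneg_of_nonpos hδ0.le hlogδ
    nlinarith
  have h3 : Real.log (p + p^6) ≤ Real.log p + p^6 / p := by
    have hq : 0 < (p + p^6) / p := by positivity
    have := Real.log_le_sub_one_of_pos hq
    rw [Real.log_div (by positivity) (ne_of_gt hp)] at this
    have h4 : (p + p^6) / p - 1 = p^6 / p := by field_simp; ring
    linarith
  have hlogpδ : Real.log (p + p^6) ≤ 0 := Real.log_nonpos (by positivity) (by linarith)
  have h5 : -p * Real.log (p + p^6) ≤ -(p + p^6) * Real.log (p + p^6) := by nlinarith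
  have h6 : -p * Real.log p - p^6 ≤ -p * Real.log (p + p^6) := by
    have hh := mul_le_mul_of_nonneg_left h3 hp.le
    have h7 : p * (Real.log p + p^6 / p) = p * Real.log p + p^6 := by field_simp
    nlinarith
  have hlogδ_eq : Real.log (p^6) = 6 * Real.log p := by
    rw [Real.log_pow]; norm_num
  have hlp : Real.log p ≤ -(1/2) := by
    calc Real.log p ≤ Real.log (1/2) := Real.log_le_log hp hp2
      _ = -Real.log 2 := by rw [show (1:ℝ)/2 = 2⁻¹ by norm_num, Real.log_inv]
      _ ≤ -(1/2) := by have := Real.log_two_gt_d9; linarith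
  set s : ℝ := -Real.log p with hs_def
  have hs : (1:ℝ)/2 ≤ s := by rw [hs_def]; linarith
  have hp5 : p^5 ≤ 1/32 := by
    have := pow_le_pow_left₀ hp.le hp2 5
    norm_num at this
    linarith
  have key : 0 ≤ (1/2) * p * s - 6 * p^6 * s - p^6 := by
    have f1 : p * (1/2) ≤ p * s := mul_le_mul_of_nonneg_left hs hp.le
    have f2 : (5:ℝ)/16 ≤ 1/2 - 6 * p^5 := by linarith
    have f0 : (0:ℝ) ≤ 1/2 - 6 * p^5 := by linarith
    have e2 : (p * (1/2)) * (5/16) ≤ (p * s) * (1/2 - 6 * p^5) := by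
      apply mul_le_mul f1 f2 (by norm_num) (by nlinarith)
    have e3 : p^6 ≤ p / 32 := by nlinarith
    nlinarith
  -- combine
  have hrhs : 6 * p^6 * Real.log p - p * Real.log p - p^6
      ≤ p * ((1 + p^6) * Real.log (1 + p^6)) + (1 - p) * (p^6 * Real.log (p^6))
        - (p + p^6) * Real.log (p + p^6) := by
    have t2 : 6 * p^6 * Real.log p ≤ (1 - p) * (p^6 * Real.log (p^6)) := by
      rw [hlogδ_eq] at h2 ⊢
      nlinarith
    nlinarith
  nlinarith

lemma segRev_one_swap {n : ℕ} {α : Type*} (x : ℕ) (hx : x + 1 < n) (η : Fin n → α) :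
    segRev x 1 η = η ∘ ⇑(Equiv.swap (⟨x, by omega⟩ : Fin n) ⟨x + 1, hx⟩) := by
  funext y
  have hn : 0 < n := by omega
  have hxm : x % n = x := Nat.mod_eq_of_lt (by omega)
  unfold segRev
  simp only [Function.comp_apply, hxm]
  rcases eq_or_ne y.val x with hy | hy
  · have hyeq : y = ⟨x, by omega⟩ := Fin.ext hy
    have hc : (y.val + n - x) % n = 0 := by
      have h0 : y.val + n - x = n := by omega
      rw [h0, Nat.mod_self]
    have hcond : (y.val + n - x) % n ≤ 1 := by rw [hc]; exact Nat.zero_le 1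
    rw [if_pos hcond, hyeq, Equiv.swap_apply_left]
    congr 1
    apply Fin.ext
    simp only [Fin.val_mk]
    rw [show x + n - x = n by omega, Nat.mod_self, Nat.sub_zero, Nat.mod_eq_of_lt hx]
  · rcases eq_or_ne y.val (x + 1) with hy2 | hy2
    · have hyeq : y = ⟨x + 1, hx⟩ := Fin.ext hy2
      have hc : (y.val + n - x) % n = 1 := by
        have h0 : y.val + n - x = 1 + n := by omega
        rw [h0, Nat.add_mod_right, Nat.mod_eq_of_lt (by omega)]
      have hcond : (y.val + n - x) % n ≤ 1 := by rw [hc]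
      rw [if_pos hcond, hyeq, Equiv.swap_apply_right]
      congr 1
      apply Fin.ext
      simp only [Fin.val_mk]
      rw [show x + 1 + n - x = 1 + n by omega, Nat.add_mod_right,
        Nat.mod_eq_of_lt (by omega : 1 < n), show x + 1 - 1 = x by omega,
        Nat.mod_eq_of_lt (by omega)]
    · have hc : ¬ ((y.val + n - x) % n ≤ 1) := by
        rcases Nat.lt_or_ge y.val x with h | h
        · have h7 : (y.val + n - x) % n = y.val + n - x :=
            Nat.mod_eq_of_lt (by omega)
          omega
        · have h8 : y.val + n - x = (y.val - x) + n := by omega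
          have h9 : (y.val + n - x) % n = y.val - x := by
            rw [h8, Nat.add_mod_right, Nat.mod_eq_of_lt (by have := y.isLt; omega)]
          omega
      rw [if_neg hc]
      rw [Equiv.swap_apply_of_ne_of_ne (Fin.ne_of_val_ne hy) (Fin.ne_of_val_ne hy2)]

lemma telescope_abs {n : ℕ} (F : Equiv.Perm (Fin n) → ℝ) (S : Set (Equiv.Perm (Fin n)))
    (B : ℝ) (hB : 0 ≤ B)
    (hstep : ∀ (σ : Equiv.Perm (Fin n)), ∀ s ∈ S, |F (σ * s) - F σ| ≤ B) :
    ∀ (l : List (Equiv.Perm (Fin n))), (∀ y ∈ l, y ∈ S) →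
      ∀ σ, |F (σ * l.prod) - F σ| ≤ l.length * B := by
  intro l
  induction l with
  | nil => intro _ σ; simp
  | cons s t ih =>
    intro hmem σ
    have h1 : σ * (s :: t).prod = (σ * s) * t.prod := by
      rw [List.prod_cons, mul_assoc]
    have h2 := ih (fun y hy => hmem y (List.mem_cons_of_mem s hy)) (σ * s)
    have h3 := hstep σ s (hmem s List.mem_cons_self)
    have h4 : |F (σ * (s :: t).prod) - F σ|
        ≤ |F ((σ * s) * t.prod) - F (σ * s)| + |F (σ * s) - F σ| := by
      rw [h1]; exact abs_sub_le _ _ _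
    have h5 : ((s :: t).length : ℝ) = (t.length : ℝ) + 1 := by
      rw [List.length_cons]; push_cast; ring
    rw [h5]
    linarith

set_option maxHeartbeats 1600000 in
lemma entF_le_K_dirL (n L : ℕ) (hn : 2 ≤ n) (hL1 : 1 ≤ L) :
    ∃ K : ℝ, 0 ≤ K ∧ ∀ f : (Fin n → Fin n) → ℝ,
      (∀ η : Equiv.Perm (Fin n), 0 < f ⇑η) →
      entF n f ≤ K * dirL n L (fun c => Real.sqrt (f c)) := by
  obtain ⟨m, rfl⟩ : ∃ m, n = m + 1 := ⟨n - 1, by omega⟩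
  set S : Set (Equiv.Perm (Fin (m + 1))) :=
    Set.range (fun i : Fin m => Equiv.swap i.castSucc i.succ) with hS
  have hgen : ∀ σ : Equiv.Perm (Fin (m + 1)),
      ∃ l : List (Equiv.Perm (Fin (m + 1))), (∀ y ∈ l, y ∈ S) ∧ l.prod = σ := by
    intro σ
    have hmem : σ ∈ Submonoid.closure S := by
      rw [hS, Equiv.Perm.mclosure_swap_castSucc_succ]; trivial
    exact Submonoid.exists_list_of_mem_closure hmem
  choose lf hl1 hl2 using hgen
  set D : ℕ := Finset.univ.sup (fun σ : Equiv.Perm (Fin (m + 1)) => (lf σ).length) with hD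
  set N : ℝ := (Nat.factorial (m + 1) : ℝ) with hNdef
  have hN : 0 < N := by rw [hNdef]; positivity
  refine ⟨8 * ((m : ℝ) + 1) * (L : ℝ) * N ^ 2 * (D : ℝ) ^ 2, by positivity, ?_⟩
  intro f hf
  set u : (Fin (m + 1) → Fin (m + 1)) → ℝ := fun c => Real.sqrt (f c) with hu
  set pf := pexp (m + 1) (fun η => f ⇑η) with hpf_def
  have hpf : 0 < pf := by
    rw [hpf_def]
    apply div_pos
    · exact Finset.sum_pos (fun η _ => hf η) ⟨1, Finset.mem_univ 1⟩
    · exact hN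
  set Tg : ℝ := ∑ x ∈ Finset.range (m + 1), ∑ σ : Equiv.Perm (Fin (m + 1)),
    (u (segRev x 1 ⇑σ) - u ⇑σ) ^ 2 with hTgdef
  have hTg0 : 0 ≤ Tg := by
    apply Finset.sum_nonneg; intro x _
    apply Finset.sum_nonneg; intro σ _
    positivity
  have hfb : ∀ σ : Equiv.Perm (Fin (m + 1)), f ⇑σ ≤ N * pf := by
    intro σ
    have h1 : f ⇑σ ≤ ∑ η : Equiv.Perm (Fin (m + 1)), f ⇑η :=
      Finset.single_le_sum (fun η _ => (hf η).le) (Finset.mem_univ σ)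
    have h2 : N * pf = ∑ η : Equiv.Perm (Fin (m + 1)), f ⇑η := by
      rw [hpf_def]; unfold pexp; field_simp; rw [hNdef]; ring
    linarith
  set B : ℝ := 2 * Real.sqrt (N * pf) * Real.sqrt Tg with hBdef
  have hB : 0 ≤ B := by positivity
  have hstep : ∀ (σ : Equiv.Perm (Fin (m + 1))), ∀ s ∈ S, |f ⇑(σ * s) - f ⇑σ| ≤ B := by
    intro σ s hs
    obtain ⟨i, rfl⟩ := hs
    have hi : (i : ℕ) + 1 < m + 1 := by have := i.isLt; omega
    have hsw : Equiv.swap i.castSucc i.succ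
        = Equiv.swap (⟨(i : ℕ), by omega⟩ : Fin (m + 1)) ⟨(i : ℕ) + 1, hi⟩ := by
      congr 1 <;> apply Fin.ext <;> simp
    have hedge : segRev (i : ℕ) 1 ⇑σ = ⇑(σ * Equiv.swap i.castSucc i.succ) := by
      rw [segRev_one_swap (i : ℕ) hi ⇑σ, hsw]; rfl
    set a := u (segRev (i : ℕ) 1 ⇑σ) with ha_def
    set b := u ⇑σ with hb_def
    have ha0 : 0 ≤ a := Real.sqrt_nonneg _
    have hb0 : 0 ≤ b := Real.sqrt_nonneg _
    have ha2 : a ^ 2 = f ⇑(σ * Equiv.swap i.castSucc i.succ) := by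
      rw [ha_def, hu]
      simp only [hedge]
      exact Real.sq_sqrt (hf _).le
    have hb2 : b ^ 2 = f ⇑σ := Real.sq_sqrt (hf _).le
    have habs : |a - b| ≤ Real.sqrt Tg := by
      rw [← Real.sqrt_sq_eq_abs]
      apply Real.sqrt_le_sqrt
      calc (a - b) ^ 2
          ≤ ∑ σ' : Equiv.Perm (Fin (m + 1)), (u (segRev (i : ℕ) 1 ⇑σ') - u ⇑σ') ^ 2 :=
            Finset.single_le_sum
              (f := fun σ' : Equiv.Perm (Fin (m + 1)) => (u (segRev (i : ℕ) 1 ⇑σ') - u ⇑σ') ^ 2)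
              (fun σ' _ => sq_nonneg _) (Finset.mem_univ σ)
        _ ≤ Tg := by
            rw [hTgdef]
            exact Finset.single_le_sum
              (f := fun x => ∑ σ' : Equiv.Perm (Fin (m + 1)),
                (u (segRev x 1 ⇑σ') - u ⇑σ') ^ 2)
              (fun x _ => Finset.sum_nonneg (fun σ' _ => sq_nonneg _))
              (Finset.mem_range.mpr (by omega : (i : ℕ) < m + 1))
    have hab : a + b ≤ 2 * Real.sqrt (N * pf) := by
      have h1 : a ≤ Real.sqrt (N * pf) := by
        rw [ha_def, hu]
        simp only [hedge]
        exact Real.sqrt_le_sqrt (hfb _)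
      have h2 : b ≤ Real.sqrt (N * pf) := Real.sqrt_le_sqrt (hfb _)
      linarith
    calc |f ⇑(σ * Equiv.swap i.castSucc i.succ) - f ⇑σ| = |a ^ 2 - b ^ 2| := by
          rw [ha2, hb2]
      _ = |a - b| * (a + b) := by
          rw [show a ^ 2 - b ^ 2 = (a - b) * (a + b) by ring, abs_mul,
            abs_of_nonneg (by linarith : (0:ℝ) ≤ a + b)]
      _ ≤ Real.sqrt Tg * (2 * Real.sqrt (N * pf)) :=
          mul_le_mul habs hab (by linarith) (Real.sqrt_nonneg _)
      _ = B := by rw [hBdef]; ring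
  have htel : ∀ σ : Equiv.Perm (Fin (m + 1)),
      |f ⇑σ - f ⇑(1 : Equiv.Perm (Fin (m + 1)))| ≤ (D : ℝ) * B := by
    intro σ
    have h1 := telescope_abs (fun σ => f ⇑σ) S B hB hstep (lf σ) (hl1 σ) 1
    rw [hl2 σ, one_mul] at h1
    calc |f ⇑σ - f ⇑(1 : Equiv.Perm (Fin (m + 1)))| ≤ ((lf σ).length : ℝ) * B := h1
      _ ≤ (D : ℝ) * B := by
          apply mul_le_mul_of_nonneg_right _ hB
          exact_mod_cast Finset.le_sup (f := fun σ => (lf σ).length) (Finset.mem_univ σ)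
  -- entropy bound
  set c : ℝ := f ⇑(1 : Equiv.Perm (Fin (m + 1))) with hc_def
  set Q : ℝ := pexp (m + 1) (fun η => (f ⇑η) ^ 2) with hQ_def
  have hEnt : entF (m + 1) f ≤ Q / pf - pf := by
    have hAlt : entF (m + 1) f
        = (∑ η : Equiv.Perm (Fin (m + 1)),
            f ⇑η * (Real.log (f ⇑η) - Real.log pf)) / N := by
      have h1 : ∑ η : Equiv.Perm (Fin (m + 1)), f ⇑η * (Real.log (f ⇑η) - Real.log pf)
          = ∑ η : Equiv.Perm (Fin (m + 1)), f ⇑η * Real.log (f ⇑η)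
            - (∑ η : Equiv.Perm (Fin (m + 1)), f ⇑η) * Real.log pf := by
        rw [Finset.sum_mul, ← Finset.sum_sub_distrib]
        apply Finset.sum_congr rfl
        intro η _
        ring
      rw [h1, sub_div, hNdef, hpf_def]
      unfold entF pexp
      ring
    rw [hAlt]
    have hpoint : ∀ η : Equiv.Perm (Fin (m + 1)),
        f ⇑η * (Real.log (f ⇑η) - Real.log pf) ≤ (f ⇑η) ^ 2 / pf - f ⇑η := by
      intro η
      have hlog : Real.log (f ⇑η) - Real.log pf ≤ f ⇑η / pf - 1 := by
        rw [← Real.log_div (hf η).ne' hpf.ne']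
        exact Real.log_le_sub_one_of_pos (div_pos (hf η) hpf)
      have := mul_le_mul_of_nonneg_left hlog (hf η).le
      calc f ⇑η * (Real.log (f ⇑η) - Real.log pf) ≤ f ⇑η * (f ⇑η / pf - 1) := this
        _ = (f ⇑η) ^ 2 / pf - f ⇑η := by field_simp
    calc (∑ η : Equiv.Perm (Fin (m + 1)),
            f ⇑η * (Real.log (f ⇑η) - Real.log pf)) / N
        ≤ (∑ η : Equiv.Perm (Fin (m + 1)), ((f ⇑η) ^ 2 / pf - f ⇑η)) / N := by
          apply div_le_div_of_nonneg_right ?_ hN.le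
          exact Finset.sum_le_sum (fun η _ => hpoint η)
      _ = Q / pf - pf := by
          rw [Finset.sum_sub_distrib, ← Finset.sum_div, sub_div, hQ_def, hpf_def]
          unfold pexp
          rw [← hNdef]
          have hSB : (0:ℝ) < ∑ η : Equiv.Perm (Fin (m + 1)), f ⇑η :=
            Finset.sum_pos (fun η _ => hf η) ⟨1, Finset.mem_univ 1⟩
          generalize (∑ η : Equiv.Perm (Fin (m + 1)), (f ⇑η) ^ 2) = SA
          generalize hSB' : (∑ η : Equiv.Perm (Fin (m + 1)), f ⇑η) = SB at hSB
          field_simp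
  have hQb : Q ≤ pf ^ 2 + ((D : ℝ) * B) ^ 2 := by
    have hid : pexp (m + 1) (fun η => (f ⇑η - c) ^ 2)
        = Q - 2 * c * pf + c ^ 2 := by
      have hsum : ∑ η : Equiv.Perm (Fin (m + 1)), (f ⇑η - c) ^ 2
          = ∑ η : Equiv.Perm (Fin (m + 1)), (f ⇑η) ^ 2
            - 2 * c * (∑ η : Equiv.Perm (Fin (m + 1)), f ⇑η) + N * c ^ 2 := by
        have h1 : ∀ η : Equiv.Perm (Fin (m + 1)),
            (f ⇑η - c) ^ 2 = (f ⇑η) ^ 2 - 2 * c * f ⇑η + c ^ 2 := fun η => by ring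
        rw [Finset.sum_congr rfl (fun η _ => h1 η), Finset.sum_add_distrib,
          Finset.sum_sub_distrib, ← Finset.mul_sum, Finset.sum_const, card_univ_perm,
          nsmul_eq_mul, ← hNdef]
      unfold pexp
      rw [hsum, ← hNdef, hQ_def, hpf_def]
      unfold pexp
      rw [← hNdef]
      generalize (∑ η : Equiv.Perm (Fin (m + 1)), (f ⇑η) ^ 2) = SA
      generalize (∑ η : Equiv.Perm (Fin (m + 1)), f ⇑η) = SB
      field_simp
    have hbd : pexp (m + 1) (fun η => (f ⇑η - c) ^ 2) ≤ ((D : ℝ) * B) ^ 2 := by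
      have hpoint : ∀ η : Equiv.Perm (Fin (m + 1)),
          (f ⇑η - c) ^ 2 ≤ ((D : ℝ) * B) ^ 2 := by
        intro η
        rw [← sq_abs]
        exact pow_le_pow_left₀ (abs_nonneg _) (htel η) 2
      calc pexp (m + 1) (fun η => (f ⇑η - c) ^ 2)
          ≤ pexp (m + 1) (fun _ => ((D : ℝ) * B) ^ 2) := by
            unfold pexp
            apply div_le_div_of_nonneg_right ?_ hN.le
            exact Finset.sum_le_sum (fun η _ => hpoint η)
        _ = ((D : ℝ) * B) ^ 2 := by
            unfold pexp
            rw [Finset.sum_const, card_univ_perm, nsmul_eq_mul, ← hNdef]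
            field_simp
    nlinarith [sq_nonneg (pf - c)]
  have hB2 : B ^ 2 = 4 * (N * pf) * Tg := by
    rw [hBdef, mul_pow, mul_pow, Real.sq_sqrt (by positivity : (0:ℝ) ≤ N * pf),
      Real.sq_sqrt hTg0]
    ring
  have hEnt2 : entF (m + 1) f ≤ 4 * (D : ℝ) ^ 2 * N * Tg := by
    have h1 : Q / pf ≤ (pf ^ 2 + ((D : ℝ) * B) ^ 2) / pf :=
      div_le_div_of_nonneg_right hQb hpf.le
    have h2 : (pf ^ 2 + ((D : ℝ) * B) ^ 2) / pf - pf = (D : ℝ) ^ 2 * B ^ 2 / pf := by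
      field_simp
      ring
    have h3 : (D : ℝ) ^ 2 * B ^ 2 / pf = 4 * (D : ℝ) ^ 2 * N * Tg := by
      rw [hB2]
      field_simp
    linarith [hEnt]
  have hdir : Tg / (2 * ((m + 1 : ℕ) : ℝ) * (L : ℝ) * N) ≤ dirL (m + 1) L u := by
    have hx1 : ∀ x ∈ Finset.range (m + 1),
        (∑ σ : Equiv.Perm (Fin (m + 1)), (u (segRev x 1 ⇑σ) - u ⇑σ) ^ 2) / N
          ≤ ∑ ℓ ∈ Finset.Icc 1 L,
            (∑ σ : Equiv.Perm (Fin (m + 1)), (u (segRev x ℓ ⇑σ) - u ⇑σ) ^ 2) / N := by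
      intro x _
      exact Finset.single_le_sum
        (f := fun ℓ => (∑ σ : Equiv.Perm (Fin (m + 1)),
          (u (segRev x ℓ ⇑σ) - u ⇑σ) ^ 2) / N)
        (fun ℓ _ => by positivity) (Finset.mem_Icc.mpr ⟨le_refl 1, hL1⟩)
    have h2 : Tg / N ≤ ∑ x ∈ Finset.range (m + 1), ∑ ℓ ∈ Finset.Icc 1 L,
        (∑ σ : Equiv.Perm (Fin (m + 1)), (u (segRev x ℓ ⇑σ) - u ⇑σ) ^ 2) / N := by
      rw [hTgdef, Finset.sum_div]
      exact Finset.sum_le_sum hx1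
    have hco : (0:ℝ) < 2 * ((m + 1 : ℕ) : ℝ) * (L : ℝ) := by positivity
    unfold dirL
    rw [← hNdef]
    calc Tg / (2 * ((m + 1 : ℕ) : ℝ) * (L : ℝ) * N)
        = (1 / (2 * ((m + 1 : ℕ) : ℝ) * (L : ℝ))) * (Tg / N) := by
          field_simp
      _ ≤ (1 / (2 * ((m + 1 : ℕ) : ℝ) * (L : ℝ))) * ∑ x ∈ Finset.range (m + 1),
          ∑ ℓ ∈ Finset.Icc 1 L, (∑ σ : Equiv.Perm (Fin (m + 1)),
            (u (segRev x ℓ ⇑σ) - u ⇑σ) ^ 2) / N := by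
          apply mul_le_mul_of_nonneg_left h2 (by positivity)
  have hKpos : (0:ℝ) ≤ 8 * ((m : ℝ) + 1) * (L : ℝ) * N ^ 2 * (D : ℝ) ^ 2 := by positivity
  calc entF (m + 1) f ≤ 4 * (D : ℝ) ^ 2 * N * Tg := hEnt2
    _ = (8 * ((m : ℝ) + 1) * (L : ℝ) * N ^ 2 * (D : ℝ) ^ 2)
        * (Tg / (2 * ((m + 1 : ℕ) : ℝ) * (L : ℝ) * N)) := by
        have hL0 : (0:ℝ) < (L : ℝ) := by exact_mod_cast hL1
        push_cast
        field_simp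
        ring
    _ ≤ (8 * ((m : ℝ) + 1) * (L : ℝ) * N ^ 2 * (D : ℝ) ^ 2)
        * dirL (m + 1) L u := mul_le_mul_of_nonneg_left hdir hKpos

lemma dirL_nonneg (n L : ℕ) (f : (Fin n → Fin n) → ℝ) : 0 ≤ dirL n L f := by
  unfold dirL
  apply mul_nonneg (by positivity)
  apply Finset.sum_nonneg
  intro x _
  apply Finset.sum_nonneg
  intro ℓ _
  positivity

lemma dirL_ge_single {n L : ℕ} (hn : 0 < n) (hL1 : 1 ≤ L) (u : (Fin n → Fin n) → ℝ)
    (x₀ : ℕ) (hx₀ : x₀ < n) (σ₀ : Equiv.Perm (Fin n)) :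
    (1 / (2 * (n : ℝ) * (L : ℝ))) *
      ((u (segRev x₀ 1 ⇑σ₀) - u ⇑σ₀) ^ 2 / (Nat.factorial n : ℝ)) ≤ dirL n L u := by
  unfold dirL
  apply mul_le_mul_of_nonneg_left _ (by positivity)
  have hNf : (0:ℝ) < (Nat.factorial n : ℝ) := by positivity
  have h1 : (u (segRev x₀ 1 ⇑σ₀) - u ⇑σ₀) ^ 2
      ≤ ∑ η : Equiv.Perm (Fin n), (u (segRev x₀ 1 ⇑η) - u ⇑η) ^ 2 :=
    Finset.single_le_sum
      (f := fun η : Equiv.Perm (Fin n) => (u (segRev x₀ 1 ⇑η) - u ⇑η) ^ 2)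
      (fun η _ => sq_nonneg _) (Finset.mem_univ σ₀)
  calc (u (segRev x₀ 1 ⇑σ₀) - u ⇑σ₀) ^ 2 / (Nat.factorial n : ℝ)
      ≤ (∑ η : Equiv.Perm (Fin n), (u (segRev x₀ 1 ⇑η) - u ⇑η) ^ 2)
          / (Nat.factorial n : ℝ) := div_le_div_of_nonneg_right h1 hNf.le
    _ ≤ ∑ ℓ ∈ Finset.Icc 1 L, (∑ η : Equiv.Perm (Fin n),
          (u (segRev x₀ ℓ ⇑η) - u ⇑η) ^ 2) / (Nat.factorial n : ℝ) :=
        Finset.single_le_sum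
          (f := fun ℓ => (∑ η : Equiv.Perm (Fin n),
            (u (segRev x₀ ℓ ⇑η) - u ⇑η) ^ 2) / (Nat.factorial n : ℝ))
          (fun ℓ _ => by positivity) (Finset.mem_Icc.mpr ⟨le_refl 1, hL1⟩)
    _ ≤ ∑ x ∈ Finset.range n, ∑ ℓ ∈ Finset.Icc 1 L, (∑ η : Equiv.Perm (Fin n),
          (u (segRev x ℓ ⇑η) - u ⇑η) ^ 2) / (Nat.factorial n : ℝ) :=
        Finset.single_le_sum
          (f := fun x => ∑ ℓ ∈ Finset.Icc 1 L, (∑ η : Equiv.Perm (Fin n),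
            (u (segRev x ℓ ⇑η) - u ⇑η) ^ 2) / (Nat.factorial n : ℝ))
          (fun x _ => Finset.sum_nonneg (fun ℓ _ => by positivity))
          (Finset.mem_range.mpr hx₀)


set_option maxHeartbeats 1000000 in
/-- `E(√ξ,√ξ) = E(ξ,ξ) ≤ (C L/n) ν[ξ]` for a universal constant `C`, and
consequently the log-Sobolev constant
`s(n,L) = sup { Ent(f)/E(√f,√f) : f positive and nonconstant }`
satisfies `s(n,L) ≥ n²/(C' L)` for a universal constant `C'`. -/
theorem logSobolev_lower_bound :
    ∃ C C' : ℝ, 0 < C ∧ 0 < C' ∧ ∀ n L : ℕ, Even n → 0 < n → 1 ≤ L → L ≤ n →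
      (dirL n L (fun η => Real.sqrt (xiInd n η)) = dirL n L (xiInd n) ∧
        dirL n L (xiInd n) ≤ C * (L : ℝ) / (n : ℝ) * pexp n (fun η => xiInd n ⇑η)) ∧
      (n : ℝ) ^ 2 / (C' * (L : ℝ)) ≤
        sSup {r : ℝ | ∃ f : (Fin n → Fin n) → ℝ,
          (∀ η : Equiv.Perm (Fin n), 0 < f ⇑η) ∧
          (∃ σ τ : Equiv.Perm (Fin n), f ⇑σ ≠ f ⇑τ) ∧
          r = entF n f / dirL n L (fun c => Real.sqrt (f c))} := by
  refine ⟨2, 16, by norm_num, by norm_num, ?_⟩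
  intro n L hEven hn hL1 hLn
  obtain ⟨k0, hk0⟩ := id hEven
  have hn2 : 2 ≤ n := by omega
  have hL0 : 0 < L := hL1
  have hNf : (0:ℝ) < (Nat.factorial n : ℝ) := by positivity
  have hLr : (0:ℝ) < (L:ℝ) := by exact_mod_cast hL0
  have hnr : (0:ℝ) < (n:ℝ) := by exact_mod_cast hn
  constructor
  · constructor
    · congr 1
      funext c
      unfold xiInd
      split_ifs
      · exact Real.sqrt_one
      · exact Real.sqrt_zero
    · calc dirL n L (xiInd n)
          = dirL n L (fun a => if halfEvent n a then (1:ℝ) else 0) := rfl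
        _ ≤ 2 * (L : ℝ) / (n : ℝ) * pexp n (fun η => xiInd n ⇑η) :=
            dirL_indic_bound hn hL1 hLn 0 1 (by norm_num)
  -- part 2
  set p : ℝ := (hcard n : ℝ) / (Nat.factorial n : ℝ) with hp_def
  have hp0 : 0 < p := by
    apply div_pos _ hNf
    exact_mod_cast hcard_pos n
  have hkey : (hcard n : ℝ) * 2 ^ (n / 2) ≤ (Nat.factorial n : ℝ) := by
    exact_mod_cast hcard_mul_pow_le n hEven
  have hk1 : 1 ≤ n / 2 := by omega
  have h2k : (2:ℝ) ≤ 2 ^ (n / 2) := by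
    calc (2:ℝ) = 2 ^ 1 := (pow_one 2).symm
      _ ≤ 2 ^ (n / 2) := pow_le_pow_right₀ (by norm_num) hk1
  have hA0 : (0:ℝ) ≤ (hcard n : ℝ) := Nat.cast_nonneg _
  have hp2 : p ≤ 1 / 2 := by
    rw [hp_def, div_le_div_iff₀ hNf (by norm_num : (0:ℝ) < 2)]
    nlinarith
  have hps : p ≤ (1/2) ^ (n/2) := by
    rw [hp_def, div_pow, one_pow, div_le_div_iff₀ hNf (by positivity)]
    linarith
  have hhalf : ((n / 2 : ℕ) : ℝ) = (n : ℝ) / 2 := by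
    have h : n / 2 * 2 = n := by omega
    rw [eq_div_iff (by norm_num : (2:ℝ) ≠ 0)]
    exact_mod_cast h
  have hlog2h : (1:ℝ)/2 ≤ Real.log 2 := by
    have := Real.log_two_gt_d9; linarith
  have hlogp : Real.log p ≤ -((n:ℝ)/2 * Real.log 2) := by
    calc Real.log p ≤ Real.log ((1/2) ^ (n/2)) := Real.log_le_log hp0 hps
      _ = ((n/2 : ℕ) : ℝ) * Real.log (1/2) := Real.log_pow _ _
      _ = -((n:ℝ)/2 * Real.log 2) := by
          rw [show (1:ℝ)/2 = 2⁻¹ by norm_num, Real.log_inv, hhalf]; ring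
  have hs : (n:ℝ)/4 ≤ -Real.log p := by
    have h1 : (n:ℝ)/2 * (1/2) ≤ (n:ℝ)/2 * Real.log 2 :=
      mul_le_mul_of_nonneg_left hlog2h (by positivity)
    have h2 : (n:ℝ)/2 * (1/2) = (n:ℝ)/4 := by ring
    linarith
  set δ : ℝ := p ^ 6 with hδ_def
  have hδ0 : 0 < δ := by rw [hδ_def]; positivity
  set f₀ : (Fin n → Fin n) → ℝ := fun c => xiInd n c + δ with hf₀
  have hEntLow : -(1/2) * p * Real.log p ≤ entF n f₀ := by
    have hE := ent_lower p hp0 hp2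
    have heq := entF_f0 n δ
    rw [← hp_def] at heq
    rw [hf₀, heq, hδ_def]
    exact hE
  have hsqrt_form : (fun c => Real.sqrt (f₀ c))
      = fun c => if halfEvent n c then Real.sqrt (1 + δ) else Real.sqrt δ := by
    funext c
    rw [hf₀]
    show Real.sqrt (xiInd n c + δ) = _
    unfold xiInd
    split_ifs
    · rfl
    · rw [zero_add]
  have hcbound : (Real.sqrt (1 + δ) - Real.sqrt δ) ^ 2 ≤ 1 := by
    have h1 : Real.sqrt δ * Real.sqrt δ = δ := Real.mul_self_sqrt hδ0.le
    have h2 : Real.sqrt (1 + δ) * Real.sqrt (1 + δ) = 1 + δ :=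
      Real.mul_self_sqrt (by linarith)
    have h3 : Real.sqrt δ ≤ Real.sqrt (1 + δ) := Real.sqrt_le_sqrt (by linarith)
    have h4 : Real.sqrt δ * Real.sqrt δ ≤ Real.sqrt δ * Real.sqrt (1 + δ) :=
      mul_le_mul_of_nonneg_left h3 (Real.sqrt_nonneg _)
    nlinarith
  have hpexpxi : pexp n (fun η => xiInd n ⇑η) = p := by rw [pexp_xi, hp_def]
  have hdirle : dirL n L (fun c => Real.sqrt (f₀ c)) ≤ 2 * (L:ℝ) * p / (n:ℝ) := by
    rw [hsqrt_form]
    calc dirL n L (fun c => if halfEvent n c then Real.sqrt (1 + δ) else Real.sqrt δ)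
        ≤ 2 * (L:ℝ) / (n:ℝ) * pexp n (fun η => xiInd n ⇑η) :=
          dirL_indic_bound hn hL1 hLn (Real.sqrt δ) (Real.sqrt (1 + δ)) hcbound
      _ = 2 * (L:ℝ) * p / (n:ℝ) := by rw [hpexpxi]; ring
  -- witness permutation
  have hx₀ : n / 2 - 1 + 1 < n := by omega
  have hx₀n : n / 2 - 1 < n := by omega
  have hIdHalf : halfEvent n ⇑(1 : Equiv.Perm (Fin n)) := by
    intro x
    simp
  have hXiOne : xiInd n ⇑(1 : Equiv.Perm (Fin n)) = 1 := if_pos hIdHalf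
  have hRevNot : ¬ halfEvent n (segRev (n / 2 - 1) 1 ⇑(1 : Equiv.Perm (Fin n))) := by
    intro H
    have hy := H ⟨n / 2 - 1, by omega⟩
    rw [segRev_one_swap (n / 2 - 1) hx₀ ⇑(1 : Equiv.Perm (Fin n))] at hy
    simp only [Function.comp_apply, Equiv.swap_apply_left, Equiv.Perm.coe_one, id_eq,
      Fin.val_mk] at hy
    omega
  have hXiRev : xiInd n (segRev (n / 2 - 1) 1 ⇑(1 : Equiv.Perm (Fin n))) = 0 :=
    if_neg hRevNot
  have hτcoe : ⇑((1 : Equiv.Perm (Fin n)) * rPerm n (n / 2 - 1) 1 (by omega))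
      = segRev (n / 2 - 1) 1 ⇑(1 : Equiv.Perm (Fin n)) :=
    (segRev_perm (n / 2 - 1) 1 (by omega) 1).symm
  have hdirpos : 0 < dirL n L (fun c => Real.sqrt (f₀ c)) := by
    have hlt : Real.sqrt δ < Real.sqrt (1 + δ) :=
      Real.sqrt_lt_sqrt hδ0.le (by linarith)
    have hterm : 0 < (Real.sqrt (f₀ (segRev (n / 2 - 1) 1 ⇑(1 : Equiv.Perm (Fin n))))
        - Real.sqrt (f₀ ⇑(1 : Equiv.Perm (Fin n)))) ^ 2 := by
      have hne : Real.sqrt (f₀ (segRev (n / 2 - 1) 1 ⇑(1 : Equiv.Perm (Fin n))))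
          - Real.sqrt (f₀ ⇑(1 : Equiv.Perm (Fin n))) ≠ 0 := by
        rw [hf₀]
        show Real.sqrt (xiInd n _ + δ) - Real.sqrt (xiInd n _ + δ) ≠ 0
        rw [hXiRev, hXiOne, zero_add]
        intro hcontra
        have := sub_eq_zero.mp hcontra
        linarith
      positivity
    calc (0:ℝ) < (1 / (2 * (n : ℝ) * (L : ℝ))) *
          ((Real.sqrt (f₀ (segRev (n / 2 - 1) 1 ⇑(1 : Equiv.Perm (Fin n))))
            - Real.sqrt (f₀ ⇑(1 : Equiv.Perm (Fin n)))) ^ 2 / (Nat.factorial n : ℝ)) := by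
          apply mul_pos (by positivity)
          exact div_pos hterm hNf
      _ ≤ dirL n L (fun c => Real.sqrt (f₀ c)) :=
          dirL_ge_single hn hL1 (fun c => Real.sqrt (f₀ c)) (n / 2 - 1) hx₀n 1
  obtain ⟨K, hK0, hK⟩ := entF_le_K_dirL n L hn2 hL1
  have hBdd : BddAbove {r : ℝ | ∃ f : (Fin n → Fin n) → ℝ,
      (∀ η : Equiv.Perm (Fin n), 0 < f ⇑η) ∧
      (∃ σ τ : Equiv.Perm (Fin n), f ⇑σ ≠ f ⇑τ) ∧
      r = entF n f / dirL n L (fun c => Real.sqrt (f c))} := by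
    refine ⟨K, ?_⟩
    rintro r ⟨f, hfpos, -, rfl⟩
    rcases eq_or_lt_of_le (dirL_nonneg n L (fun c => Real.sqrt (f c))) with h0 | h0
    · rw [← h0, div_zero]; exact hK0
    · rw [div_le_iff₀ h0]
      exact hK f hfpos
  have hmem : entF n f₀ / dirL n L (fun c => Real.sqrt (f₀ c)) ∈
      {r : ℝ | ∃ f : (Fin n → Fin n) → ℝ,
        (∀ η : Equiv.Perm (Fin n), 0 < f ⇑η) ∧
        (∃ σ τ : Equiv.Perm (Fin n), f ⇑σ ≠ f ⇑τ) ∧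
        r = entF n f / dirL n L (fun c => Real.sqrt (f c))} := by
    refine ⟨f₀, ?_, ⟨1, (1 : Equiv.Perm (Fin n)) * rPerm n (n / 2 - 1) 1 (by omega), ?_⟩, rfl⟩
    · intro η
      rw [hf₀]
      have hxi0 : 0 ≤ xiInd n ⇑η := by unfold xiInd; split_ifs <;> norm_num
      show 0 < xiInd n ⇑η + δ
      linarith
    · rw [hf₀]
      show xiInd n _ + δ ≠ xiInd n _ + δ
      rw [hτcoe, hXiOne, hXiRev]
      norm_num
  have hE1 : p * (n:ℝ) / 8 ≤ entF n f₀ := by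
    have h1 : p * ((n:ℝ)/4) ≤ p * (-Real.log p) := mul_le_mul_of_nonneg_left hs hp0.le
    have h2 : -(1/2) * p * Real.log p = (1/2) * (p * (-Real.log p)) := by ring
    have h3 : p * (n:ℝ) / 8 = (1/2) * (p * ((n:ℝ)/4)) := by ring
    linarith [hEntLow, h1]
  have hE0 : 0 ≤ entF n f₀ := le_trans (by positivity) hE1
  have heqq : (n:ℝ) ^ 2 / (16 * (L:ℝ)) = (p * (n:ℝ) / 8) / (2 * (L:ℝ) * p / (n:ℝ)) := by
    field_simp
    ring
  calc (n:ℝ) ^ 2 / (16 * (L:ℝ)) = (p * (n:ℝ) / 8) / (2 * (L:ℝ) * p / (n:ℝ)) := heqq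
    _ ≤ entF n f₀ / dirL n L (fun c => Real.sqrt (f₀ c)) :=
        div_le_div₀ hE0 hE1 hdirpos hdirle
    _ ≤ sSup {r : ℝ | ∃ f : (Fin n → Fin n) → ℝ,
          (∀ η : Equiv.Perm (Fin n), 0 < f ⇑η) ∧
          (∃ σ τ : Equiv.Perm (Fin n), f ⇑σ ≠ f ⇑τ) ∧
          r = entF n f / dirL n L (fun c => Real.sqrt (f c))} := le_csSup hBdd hmem
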